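/- Let A = M + Λ ⊆ ℝ³ be a periodic point set with unit cell U, and let k ≥ 1. Then the probability that a uniformly random point of U lies in at least k closed balls of radius t centered at points of A equals (1/vol(U)) · Σ_{a∈M} vol(Z_k(a;A) ∩ B(t,a)), where Z_k(a;A) is the k-th Brillouin zone of a. -/

import Mathlib

open MeasureTheory Set Metric Pointwise

noncomputable section

/-- 3-dimensional Euclidean space. -/
abbrev E3 := EuclideanSpace ℝ (Fin 3)

/-- The lattice generated by the vectors `b 0, b 1, b 2`. -/
def lat (b : Fin 3 → E3) : Set E3 := {x | ∃ n : Fin 3 → ℤ, x = ∑ i, (n i : ℝ) • b i}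

/-- The unit cell spanned by the vectors `b 0, b 1, b 2`. -/
def cell (b : Fin 3 → E3) : Set E3 :=
  {x | ∃ c : Fin 3 → ℝ, (∀ i, 0 ≤ c i ∧ c i < 1) ∧ x = ∑ i, c i • b i}

/-- The `k`-fold cover: points lying in at least `k` closed balls of radius `t`
centered at points of `A`. -/
def coverGE (A : Set E3) (t : ℝ) (k : ℕ) : Set E3 :=
  {x | ∃ F : Finset E3, F.card = k ∧ ↑F ⊆ A ∧ ∀ a ∈ F, dist x a ≤ t}

/-- Points lying in exactly `k` closed balls of radius `t` centered at points of `A`. -/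
def coverEQ (A : Set E3) (t : ℝ) (k : ℕ) : Set E3 :=
  {x | ∃ F : Finset E3, ↑F = {a ∈ A | dist x a ≤ t} ∧ F.card = k}

/-- The `k`-th Dirichlet–Voronoi domain of `a` in `A` (with `D_0 = ∅`). -/
def DV (A : Set E3) (a : E3) : ℕ → Set E3
  | 0 => ∅
  | (k+1) => {x | ({b ∈ A | dist x b < dist x a}).ncard ≤ k}

/-- The `k`-th Brillouin zone of `a` in `A`. -/
def BZ (A : Set E3) (a : E3) (k : ℕ) : Set E3 := DV A a k \ DV A a (k-1)

/-! ### Auxiliary lemmas -/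

section Aux

lemma lat_eq (B : Module.Basis (Fin 3) ℝ E3) :
    lat ⇑B = ↑(Submodule.span ℤ (Set.range ⇑B)) := by
  ext x
  rw [SetLike.mem_coe, Submodule.mem_span_range_iff_exists_fun ℤ]
  constructor
  · rintro ⟨n, rfl⟩
    exact ⟨n, by simp [← Int.cast_smul_eq_zsmul ℝ]⟩
  · rintro ⟨n, rfl⟩
    exact ⟨n, by simp [← Int.cast_smul_eq_zsmul ℝ]⟩

lemma cell_eq (B : Module.Basis (Fin 3) ℝ E3) :
    cell ⇑B = ZSpan.fundamentalDomain B := by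
  ext x
  constructor
  · rintro ⟨c, hc, rfl⟩
    intro i
    rw [B.repr_sum_self]
    exact ⟨(hc i).1, (hc i).2⟩
  · intro h
    exact ⟨fun i => B.repr x i, fun i => ⟨(h i).1, (h i).2⟩, (B.sum_repr x).symm⟩

lemma lat_countable (b : Fin 3 → E3) : (lat b).Countable := by
  have : lat b = Set.range (fun n : Fin 3 → ℤ => ∑ i, (n i : ℝ) • b i) := by
    ext x; simp [lat, eq_comm, Set.mem_range]
  rw [this]
  exact Set.countable_range _

lemma lat_finite_inter (B : Module.Basis (Fin 3) ℝ E3) {s : Set E3}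
    (hs : Bornology.IsBounded s) : (s ∩ lat ⇑B).Finite := by
  rw [lat_eq]
  haveI : DiscreteTopology ((Submodule.span ℤ (Set.range ⇑B) : Submodule ℤ E3) : Set E3) :=
    (inferInstance : DiscreteTopology (Submodule.span ℤ (Set.range ⇑B)))
  exact Metric.finite_isBounded_inter_isClosed DiscreteTopology.isDiscrete hs
    (AddSubgroup.isClosed_of_discrete (H := (Submodule.span ℤ (Set.range ⇑B)).toAddSubgroup))

lemma A_finite (B : Module.Basis (Fin 3) ℝ E3) (M : Finset E3) {s : Set E3}
    (hs : Bornology.IsBounded s) : ((↑M + lat ⇑B) ∩ s).Finite := by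
  have hsub : (↑M + lat ⇑B) ∩ s ⊆ ⋃ a ∈ M, (a + ·) '' (((-a + ·) '' s) ∩ lat ⇑B) := by
    rintro x ⟨⟨a, ha, v, hv, rfl⟩, hxs⟩
    refine Set.mem_biUnion ha ⟨v, ⟨⟨a + v, hxs, by show -a + (a + v) = v; rw [neg_add_cancel_left]⟩, hv⟩, rfl⟩
  refine Set.Finite.subset (Set.Finite.biUnion M.finite_toSet fun a _ => ?_) hsub
  refine Set.Finite.image _ (lat_finite_inter B ?_)
  have : (fun x => -a + x) '' s = -a +ᵥ s := rfl
  rw [this]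
  exact hs.vadd _

lemma mem_BZ_iff (A : Set E3) (a x : E3) (m : ℕ) :
    x ∈ BZ A a (m+1) ↔ ({b ∈ A | dist x b < dist x a}).ncard = m := by
  rcases m with _ | m'
  · simp [BZ, DV, Nat.le_zero]
  · show x ∈ DV A a (m'+2) \ DV A a (m'+1) ↔ _
    simp only [DV, Set.mem_diff, Set.mem_setOf_eq]
    omega

lemma exists_card_filter_lt : ∀ (m : ℕ) (S : Finset ℝ), m < S.card →
    ∃ r ∈ S, (S.filter (· < r)).card = m := by
  intro m
  induction m with
  | zero =>
    intro S hS
    have hne : S.Nonempty := Finset.card_pos.mp hS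
    refine ⟨S.min' hne, S.min'_mem hne, ?_⟩
    rw [Finset.card_eq_zero, Finset.filter_eq_empty_iff]
    intro y hy
    exact not_lt.mpr (S.min'_le y hy)
  | succ m ih =>
    intro S hS
    have hne : S.Nonempty := Finset.card_pos.mp (Nat.lt_of_le_of_lt (Nat.zero_le _) hS)
    set r0 := S.min' hne with hr0
    have hr0S : r0 ∈ S := S.min'_mem hne
    have hcard : m < (S.erase r0).card := by
      rw [Finset.card_erase_of_mem hr0S]; omega
    obtain ⟨r, hrS, hr⟩ := ih (S.erase r0) hcard
    have hrS' : r ∈ S := Finset.mem_of_mem_erase hrS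
    have hr0r : r0 < r :=
      lt_of_le_of_ne (S.min'_le r hrS') (Ne.symm (Finset.ne_of_mem_erase hrS))
    refine ⟨r, hrS', ?_⟩
    have : S.filter (· < r) = insert r0 ((S.erase r0).filter (· < r)) := by
      ext y
      simp only [Finset.mem_filter, Finset.mem_insert, Finset.mem_erase]
      constructor
      · rintro ⟨hyS, hyr⟩
        by_cases h : y = r0
        · exact Or.inl h
        · exact Or.inr ⟨⟨h, hyS⟩, hyr⟩
      · rintro (rfl | ⟨⟨_, hyS⟩, hyr⟩)
        · exact ⟨hr0S, hr0r⟩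
        · exact ⟨hyS, hyr⟩
    rw [this, Finset.card_insert_of_notMem, hr]
    intro hmem
    exact (Finset.mem_erase.mp (Finset.mem_of_mem_filter _ hmem)).1 rfl

lemma coverGE_forward (A : Set E3) (x : E3) (t : ℝ) (m : ℕ)
    (hAfin : ∀ s : Set E3, Bornology.IsBounded s → (A ∩ s).Finite)
    (hdist : ∀ p ∈ A, ∀ q ∈ A, p ≠ q → dist x p ≠ dist x q)
    (hx : x ∈ coverGE A t (m+1)) :
    ∃ c ∈ A, ({b ∈ A | dist x b < dist x c}).ncard = m ∧ dist x c ≤ t := by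
  obtain ⟨F, hFcard, hFA, hFt⟩ := hx
  have hSfin : (A ∩ closedBall x t).Finite := hAfin _ isBounded_closedBall
  set S := hSfin.toFinset with hS
  have hmemS : ∀ c : E3, c ∈ S ↔ c ∈ A ∧ dist x c ≤ t := by
    intro c
    rw [hS, Set.Finite.mem_toFinset]
    simp [Set.mem_inter_iff, mem_closedBall, dist_comm]
  have hFS : F ⊆ S := by
    intro c hc
    exact (hmemS c).mpr ⟨hFA hc, hFt c hc⟩
  have hinj : Set.InjOn (fun c => dist x c) ↑S := by
    intro p hp q hq hpq
    by_contra h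
    exact hdist p ((hmemS p).mp hp).1 q ((hmemS q).mp hq).1 h hpq
  set T := S.image (fun c => dist x c) with hT
  have hTcard : T.card = S.card := Finset.card_image_of_injOn hinj
  have hmT : m < T.card := by
    rw [hTcard]
    calc m < F.card := by omega
    _ ≤ S.card := Finset.card_le_card hFS
  obtain ⟨r, hrT, hrcard⟩ := exists_card_filter_lt m T hmT
  obtain ⟨c, hcS, hcr⟩ := Finset.mem_image.mp hrT
  subst hcr
  obtain ⟨hcA, hct⟩ := (hmemS c).mp hcS
  refine ⟨c, hcA, ?_, hct⟩
  have hset : {b ∈ A | dist x b < dist x c} = ↑(S.filter (fun b => dist x b < dist x c)) := by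
    ext y
    simp only [Set.mem_setOf_eq, Finset.coe_filter]
    constructor
    · rintro ⟨hyA, hyr⟩
      exact ⟨(hmemS y).mpr ⟨hyA, le_of_lt (lt_of_lt_of_le hyr hct)⟩, hyr⟩
    · rintro ⟨hyS, hyr⟩
      exact ⟨((hmemS y).mp hyS).1, hyr⟩
  rw [hset, Set.ncard_coe_finset]
  rw [← hrcard]
  have himg : (S.filter (fun b => dist x b < dist x c)).image (fun c => dist x c)
      = T.filter (· < dist x c) := by
    rw [hT, Finset.filter_image]
  rw [← himg]
  refine (Finset.card_image_of_injOn (hinj.mono ?_)).symm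
  rintro y hy
  exact Finset.mem_coe.mpr (Finset.filter_subset _ _ (Finset.mem_coe.mp hy))

lemma closer_finite (A : Set E3) (x : E3) (r : ℝ)
    (hAfin : ∀ s : Set E3, Bornology.IsBounded s → (A ∩ s).Finite) :
    ({b ∈ A | dist x b < r}).Finite := by
  refine Set.Finite.subset (hAfin (ball x r) isBounded_ball) ?_
  rintro y ⟨hyA, hy⟩
  exact ⟨hyA, by rwa [mem_ball, dist_comm]⟩

lemma coverGE_backward (A : Set E3) (x : E3) (t : ℝ) (m : ℕ) (c : E3)
    (hAfin : ∀ s : Set E3, Bornology.IsBounded s → (A ∩ s).Finite)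
    (hcA : c ∈ A) (hnc : ({b ∈ A | dist x b < dist x c}).ncard = m) (hct : dist x c ≤ t) :
    x ∈ coverGE A t (m+1) := by
  classical
  have hfin : ({b ∈ A | dist x b < dist x c}).Finite := closer_finite A x _ hAfin
  refine ⟨insert c hfin.toFinset, ?_, ?_, ?_⟩
  · rw [Finset.card_insert_of_notMem, ← Set.ncard_eq_toFinset_card _ hfin, hnc]
    rw [Set.Finite.mem_toFinset]
    rintro ⟨-, h⟩
    exact lt_irrefl _ h
  · intro y hy
    rcases Finset.mem_insert.mp hy with rfl | hy
    · exact hcA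
    · exact ((Set.Finite.mem_toFinset _).mp hy).1
  · intro y hy
    rcases Finset.mem_insert.mp hy with rfl | hy
    · exact hct
    · exact le_of_lt (lt_of_lt_of_le ((Set.Finite.mem_toFinset _).mp hy).2 hct)

lemma BZ_disjoint (A : Set E3) (x : E3) (m : ℕ) (c c' : E3)
    (hAfin : ∀ s : Set E3, Bornology.IsBounded s → (A ∩ s).Finite)
    (hdist : ∀ p ∈ A, ∀ q ∈ A, p ≠ q → dist x p ≠ dist x q)
    (hcA : c ∈ A) (hc'A : c' ∈ A) (hne : c ≠ c')
    (hnc : ({b ∈ A | dist x b < dist x c}).ncard = m)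
    (hnc' : ({b ∈ A | dist x b < dist x c'}).ncard = m) : False := by
  wlog hlt : dist x c < dist x c' generalizing c c'
  · exact this c' c hc'A hcA hne.symm hnc' hnc
      (lt_of_le_of_ne (not_lt.mp hlt) (hdist c' hc'A c hcA hne.symm))
  have hfin : ({b ∈ A | dist x b < dist x c'}).Finite := closer_finite A x _ hAfin
  have hssub : {b ∈ A | dist x b < dist x c} ⊂ {b ∈ A | dist x b < dist x c'} := by
    constructor
    · rintro y ⟨hyA, hy⟩
      exact ⟨hyA, lt_trans hy hlt⟩
    · intro hsub
      have : c ∈ {b ∈ A | dist x b < dist x c} := hsub ⟨hcA, hlt⟩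
      exact lt_irrefl _ this.2
  have := Set.ncard_lt_ncard hssub hfin
  omega

lemma DV_closed (A : Set E3) (a : E3) (k : ℕ)
    (hAfin : ∀ s : Set E3, Bornology.IsBounded s → (A ∩ s).Finite) :
    IsClosed (DV A a k) := by
  classical
  cases k with
  | zero => exact isClosed_empty
  | succ k =>
    rw [← isOpen_compl_iff]
    rw [isOpen_iff_mem_nhds]
    intro x hx
    simp only [Set.mem_compl_iff, DV, Set.mem_setOf_eq, not_le] at hx
    have hfin : ({b ∈ A | dist x b < dist x a}).Finite := closer_finite A x _ hAfin
    have hcard : k + 1 ≤ hfin.toFinset.card := by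
      rw [← Set.ncard_eq_toFinset_card _ hfin]; omega
    obtain ⟨F, hFsub, hFcard⟩ := Finset.exists_subset_card_eq hcard
    have hFmem : ∀ c ∈ F, c ∈ A ∧ dist x c < dist x a := by
      intro c hc
      exact (Set.Finite.mem_toFinset hfin).mp (hFsub hc)
    have hopen : IsOpen (⋂ c ∈ F, {y : E3 | dist y c < dist y a}) := by
      refine isOpen_biInter_finset fun c _ => ?_
      exact isOpen_lt (Continuous.dist continuous_id continuous_const)
        (Continuous.dist continuous_id continuous_const)
    refine Filter.mem_of_superset (hopen.mem_nhds ?_) ?_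
    · exact Set.mem_biInter fun c hc => (hFmem c hc).2
    · intro y hy
      simp only [Set.mem_compl_iff, DV, Set.mem_setOf_eq, not_le]
      have hsub : ↑F ⊆ {b ∈ A | dist y b < dist y a} := by
        intro c hc
        have hc' := Finset.mem_coe.mp hc
        exact ⟨(hFmem c hc').1, (Set.mem_iInter₂.mp hy c hc' : _)⟩
      calc k < k + 1 := by omega
      _ = (↑F : Set E3).ncard := by rw [Set.ncard_coe_finset, hFcard]
      _ ≤ _ := Set.ncard_le_ncard hsub (closer_finite A y _ hAfin)

lemma closer_translate (A : Set E3) (a v x : E3)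
    (hAv : ∀ y : E3, y + v ∈ A ↔ y ∈ A) :
    {c ∈ A | dist x c < dist x (a + v)} = (· + v) '' {c ∈ A | dist (x - v) c < dist (x - v) a} := by
  ext c
  constructor
  · rintro ⟨hcA, hlt⟩
    refine ⟨c - v, ⟨(hAv (c - v)).mp (by rwa [sub_add_cancel]), ?_⟩, sub_add_cancel c v⟩
    have h1 : dist (x - v) (c - v) = dist x c := by
      simpa using dist_add_right (x - v) (c - v) v
    have h2 : dist (x - v) a = dist x (a + v) := by
      simpa using (dist_add_right (x - v) a v).symm
    rw [h1, h2]; exact hlt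
  · rintro ⟨c', ⟨hc'A, hlt⟩, rfl⟩
    refine ⟨(hAv c').mpr hc'A, ?_⟩
    have h1 : dist x (c' + v) = dist (x - v) c' := by
      simpa using (dist_add_right (x - v) c' v).symm
    have h2 : dist x (a + v) = dist (x - v) a := by
      simpa using (dist_add_right (x - v) a v).symm
    rw [h1, h2]; exact hlt

lemma DV_translate (A : Set E3) (a v x : E3) (k : ℕ)
    (hAv : ∀ y : E3, y + v ∈ A ↔ y ∈ A) :
    x ∈ DV A (a + v) k ↔ x - v ∈ DV A a k := by
  cases k with
  | zero => simp [DV]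
  | succ k =>
    show ({c ∈ A | dist x c < dist x (a + v)}).ncard ≤ k ↔
      ({c ∈ A | dist (x - v) c < dist (x - v) a}).ncard ≤ k
    rw [closer_translate A a v x hAv,
      Set.ncard_image_of_injective _ (add_left_injective v)]

lemma BZ_ball_translate (A : Set E3) (a v x : E3) (k : ℕ) (t : ℝ)
    (hAv : ∀ y : E3, y + v ∈ A ↔ y ∈ A) :
    x ∈ BZ A (a + v) k ∩ closedBall (a + v) t ↔
      x - v ∈ BZ A a k ∩ closedBall a t := by
  simp only [BZ, Set.mem_inter_iff, Set.mem_diff, DV_translate A a v x _ hAv,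
    mem_closedBall]
  have : dist x (a + v) = dist (x - v) a := by
    simpa using (dist_add_right (x - v) a v).symm
  rw [this]

lemma bisector_null (p q : E3) (h : p ≠ q) :
    volume {x : E3 | dist x p = dist x q} = 0 := by
  have heq : {x : E3 | dist x p = dist x q} = (AffineSubspace.perpBisector p q : Set E3) := by
    ext x
    exact (AffineSubspace.mem_perpBisector_iff_dist_eq).symm
  rw [heq]
  refine MeasureTheory.Measure.addHaar_affineSubspace _ _ ?_
  intro htop
  apply h
  have hp : p ∈ AffineSubspace.perpBisector p q := htop ▸ AffineSubspace.mem_top _ _ _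
  have := AffineSubspace.mem_perpBisector_iff_dist_eq.mp hp
  rw [dist_self] at this
  exact dist_eq_zero.mp this.symm

lemma null_set_N (A : Set E3) (hc : A.Countable) :
    volume (⋃ (p : A) (q : A), {x : E3 | dist x p.1 = dist x q.1 ∧ p.1 ≠ q.1}) = 0 := by
  haveI := hc.to_subtype
  refine measure_iUnion_null fun p => measure_iUnion_null fun q => ?_
  by_cases h : p.1 = q.1
  · simp [h]
  · refine measure_mono_null ?_ (bisector_null p.1 q.1 h)
    rintro x ⟨hx, -⟩
    exact hx

lemma unique_decomp (B : Module.Basis (Fin 3) ℝ E3) {a a' v v' : E3}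
    (ha : a ∈ ZSpan.fundamentalDomain B) (ha' : a' ∈ ZSpan.fundamentalDomain B)
    (hv : v ∈ Submodule.span ℤ (Set.range ⇑B)) (hv' : v' ∈ Submodule.span ℤ (Set.range ⇑B))
    (h : a + v = a' + v') : a = a' ∧ v = v' := by
  have hw : a - a' ∈ Submodule.span ℤ (Set.range ⇑B) := by
    have heq : a - a' = v' - v := by
      linear_combination (norm := abel) h
    rw [heq]
    exact sub_mem hv' hv
  obtain ⟨u, hu1, hu2⟩ := ZSpan.exist_unique_vadd_mem_fundamentalDomain B a'
  have h1 : (⟨a - a', hw⟩ : Submodule.span ℤ (Set.range ⇑B)) +ᵥ a' ∈ ZSpan.fundamentalDomain B := by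
    show (a - a') + a' ∈ _
    rwa [sub_add_cancel]
  have h0 : (0 : Submodule.span ℤ (Set.range ⇑B)) +ᵥ a' ∈ ZSpan.fundamentalDomain B := by
    show (0 : E3) + a' ∈ _
    rwa [zero_add]
  have := (hu2 _ h1).trans (hu2 _ h0).symm
  have haa' : a - a' = 0 := congrArg Subtype.val this
  have ha2 : a = a' := by linear_combination (norm := abel) haa'
  refine ⟨ha2, ?_⟩
  subst ha2
  exact add_left_cancel h

end Aux


lemma main_aux (B : Module.Basis (Fin 3) ℝ E3) (M : Finset E3) (hM : ↑M ⊆ cell ⇑B)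
    (A : Set E3) (hA : A = ↑M + lat ⇑B) (m : ℕ) (t : ℝ) :
    volume (cell ⇑B ∩ coverGE A t (m+1)) =
      ∑ a ∈ M, volume (BZ A a (m+1) ∩ closedBall a t) := by
  classical
  have hAfin : ∀ s : Set E3, Bornology.IsBounded s → (A ∩ s).Finite := by
    intro s hs; rw [hA]; exact A_finite B M hs
  have hAcount : A.Countable := by
    rw [hA, ← Set.image2_add]
    exact Set.Countable.image2 M.countable_toSet (lat_countable ⇑B) _
  have hAv : ∀ v ∈ lat ⇑B, ∀ y : E3, y + v ∈ A ↔ y ∈ A := by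
    intro v hv y
    rw [hA]
    constructor
    · rintro ⟨a, ha, w, hw, heq⟩
      refine ⟨a, ha, w - v, ?_, ?_⟩
      · rw [lat_eq] at hw hv ⊢; exact sub_mem hw hv
      · linear_combination (norm := module) heq
    · rintro ⟨a, ha, w, hw, heq⟩
      refine ⟨a, ha, w + v, ?_, ?_⟩
      · rw [lat_eq] at hw hv ⊢; exact add_mem hw hv
      · linear_combination (norm := module) heq
  have hMA : ∀ a ∈ M, ∀ v ∈ lat ⇑B, a + v ∈ A := by
    intro a ha v hv; rw [hA]; exact ⟨a, ha, v, hv, rfl⟩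
  set Λ := Submodule.span ℤ (Set.range ⇑B) with hΛdef
  have hlatΛ : lat ⇑B = ↑Λ := lat_eq B
  haveI hΛc : Countable Λ := by
    have h : (↑Λ : Set E3).Countable := hlatΛ ▸ lat_countable ⇑B
    exact h.to_subtype
  set L := Λ.toAddSubgroup with hLdef
  haveI : Countable L := hΛc
  have hFD : IsAddFundamentalDomain L (ZSpan.fundamentalDomain B) volume :=
    ZSpan.isAddFundamentalDomain' B volume
  have hLlat : ∀ v : L, (v : E3) ∈ lat ⇑B := by
    intro v; rw [hlatΛ]; exact v.2
  set N := ⋃ (p : A) (q : A), {x : E3 | dist x p.1 = dist x q.1 ∧ p.1 ≠ q.1} with hNdef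
  have hN : volume N = 0 := null_set_N A hAcount
  have hdist : ∀ x : E3, x ∉ N → ∀ p ∈ A, ∀ q ∈ A, p ≠ q → dist x p ≠ dist x q := by
    intro x hx p hp q hq hne heq
    exact hx (Set.mem_iUnion.2 ⟨⟨p, hp⟩, Set.mem_iUnion.2 ⟨⟨q, hq⟩, ⟨heq, hne⟩⟩⟩)
  set S : E3 → Set E3 := fun a => BZ A a (m+1) ∩ closedBall a t with hSdef
  have hSmeas : ∀ a, MeasurableSet (S a) := by
    intro a
    exact (((DV_closed A a (m+1) hAfin).measurableSet).diff
      ((DV_closed A a m hAfin).measurableSet)).inter measurableSet_closedBall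
  have hvadd : ∀ (v x : E3) (s : Set E3), x ∈ v +ᵥ s ↔ x - v ∈ s := by
    intro v x s
    rw [Set.mem_vadd_set_iff_neg_vadd_mem]
    have : -v +ᵥ x = x - v := by
      show -v + x = x - v
      abel
    rw [this]
  set U := ⋃ (p : M × L), (ZSpan.fundamentalDomain B ∩ ((p.2 : E3) +ᵥ S (p.1 : E3)))
    with hUdef
  have h2 : U ⊆ cell ⇑B ∩ coverGE A t (m+1) := by
    rintro x hx
    obtain ⟨p, hpF, hpv⟩ := Set.mem_iUnion.mp hx
    obtain ⟨⟨a, haM⟩, v⟩ := p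
    have hxS : x - (v : E3) ∈ S a := (hvadd _ _ _).mp hpv
    have hxin : x ∈ BZ A (a + v) (m+1) ∩ closedBall (a + (v : E3)) t :=
      (BZ_ball_translate A a v x (m+1) t (hAv v (hLlat v))).mpr hxS
    refine ⟨by rw [cell_eq]; exact hpF, ?_⟩
    exact coverGE_backward A x t m (a + v) hAfin (hMA a haM v (hLlat v))
      ((mem_BZ_iff A _ x m).mp hxin.1) (mem_closedBall.mp hxin.2)
  have h1 : cell ⇑B ∩ coverGE A t (m+1) ⊆ U ∪ N := by
    rintro x ⟨hxc, hxcov⟩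
    by_cases hxN : x ∈ N
    · exact Or.inr hxN
    refine Or.inl ?_
    obtain ⟨c, hcA, hnc, hct⟩ :=
      coverGE_forward A x t m hAfin (hdist x hxN) hxcov
    rw [hA] at hcA
    obtain ⟨a, haM, v, hv, heq⟩ := hcA
    subst heq
    have hxin : x ∈ BZ A (a + v) (m+1) ∩ closedBall (a + v) t :=
      ⟨(mem_BZ_iff A _ x m).mpr hnc, mem_closedBall.mpr hct⟩
    have hxS : x - v ∈ S a :=
      (BZ_ball_translate A a v x (m+1) t (hAv v hv)).mp hxin
    have hvL : v ∈ L := by rw [hlatΛ] at hv; exact hv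
    refine Set.mem_iUnion.mpr ⟨(⟨a, haM⟩, ⟨v, hvL⟩), ?_, ?_⟩
    · rw [← cell_eq]; exact hxc
    · exact (hvadd _ _ _).mpr hxS
  have hvolU : volume (cell ⇑B ∩ coverGE A t (m+1)) = volume U :=
    le_antisymm ((measure_mono h1).trans
      ((measure_union_le _ _).trans (by rw [hN, add_zero]))) (measure_mono h2)
  have hpair : Pairwise (Function.onFun (AEDisjoint volume)
      fun p : M × L => ZSpan.fundamentalDomain B ∩ ((p.2 : E3) +ᵥ S (p.1 : E3))) := by
    intro p q hpq
    have hsub : (ZSpan.fundamentalDomain B ∩ ((p.2 : E3) +ᵥ S (p.1 : E3))) ∩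
        (ZSpan.fundamentalDomain B ∩ ((q.2 : E3) +ᵥ S (q.1 : E3))) ⊆ N := by
      rintro x ⟨⟨-, hxp⟩, ⟨-, hxq⟩⟩
      by_contra hxN
      have hd := hdist x hxN
      have hxinp : x ∈ BZ A ((p.1 : E3) + p.2) (m+1) ∩ closedBall ((p.1 : E3) + p.2) t :=
        (BZ_ball_translate A p.1 p.2 x (m+1) t (hAv _ (hLlat p.2))).mpr ((hvadd _ _ _).mp hxp)
      have hxinq : x ∈ BZ A ((q.1 : E3) + q.2) (m+1) ∩ closedBall ((q.1 : E3) + q.2) t :=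
        (BZ_ball_translate A q.1 q.2 x (m+1) t (hAv _ (hLlat q.2))).mpr ((hvadd _ _ _).mp hxq)
      by_cases hc : (p.1 : E3) + p.2 = (q.1 : E3) + q.2
      · obtain ⟨h1', h2'⟩ := unique_decomp B (by rw [← cell_eq]; exact hM p.1.2)
          (by rw [← cell_eq]; exact hM q.1.2) p.2.2 q.2.2 hc
        exact hpq (Prod.ext (Subtype.ext h1') (Subtype.ext h2'))
      · exact BZ_disjoint A x m _ _ hAfin hd
          (hMA p.1 p.1.2 p.2 (hLlat p.2)) (hMA q.1 q.1.2 q.2 (hLlat q.2)) hc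
          ((mem_BZ_iff A _ x m).mp hxinp.1) ((mem_BZ_iff A _ x m).mp hxinq.1)
    exact measure_mono_null hsub hN
  have hmeasp : ∀ p : M × L, NullMeasurableSet
      (ZSpan.fundamentalDomain B ∩ ((p.2 : E3) +ᵥ S (p.1 : E3))) volume := fun p =>
    ((ZSpan.fundamentalDomain_measurableSet B).inter
      ((hSmeas p.1).const_vadd _)).nullMeasurableSet
  rw [hvolU, hUdef, measure_iUnion₀ hpair hmeasp]
  rw [ENNReal.tsum_prod
    (f := fun (a : M) (v : L) =>
      volume (ZSpan.fundamentalDomain B ∩ ((v : E3) +ᵥ S (a : E3))))]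
  have hinner : ∀ a : E3,
      ∑' (v : L), volume (ZSpan.fundamentalDomain B ∩ ((v : E3) +ᵥ S a)) = volume (S a) := by
    intro a
    rw [hFD.measure_eq_tsum (S a)]
    refine tsum_congr fun v => ?_
    rw [inter_comm]
    rfl
  calc ∑' (a : M), ∑' (v : L),
      volume (ZSpan.fundamentalDomain B ∩ ((v : E3) +ᵥ S (a : E3)))
      = ∑' (a : M), volume (S (a : E3)) := tsum_congr fun a => hinner a
    _ = ∑ a : M, volume (S (a : E3)) := tsum_fintype _
    _ = ∑ a ∈ M, volume (S a) := Finset.sum_coe_sort M fun a => volume (S a)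
    _ = ∑ a ∈ M, volume (BZ A a (m+1) ∩ closedBall a t) := rfl

theorem density_for_periodic_set (b : Fin 3 → E3) (hb : LinearIndependent ℝ b)
    (M : Finset E3) (hM : ↑M ⊆ cell b)
    (A : Set E3) (hA : A = ↑M + lat b)
    (k : ℕ) (hk : 1 ≤ k) (t : ℝ) (ht : 0 ≤ t) :
    volume (cell b ∩ coverGE A t k) =
      ∑ a ∈ M, volume (BZ A a k ∩ closedBall a t) := by
  have hcard : Fintype.card (Fin 3) = Module.finrank ℝ E3 := by simp
  let B : Module.Basis (Fin 3) ℝ E3 := basisOfLinearIndependentOfCardEqFinrank hb hcard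
  have hBb : ⇑B = b := by
    funext i
    simp [B, coe_basisOfLinearIndependentOfCardEqFinrank]
  obtain ⟨m, rfl⟩ : ∃ m, k = m + 1 := ⟨k - 1, by omega⟩
  rw [← hBb] at hM hA ⊢
  exact main_aux B M hM A hA m t
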